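/- Let E and F be complex inner product spaces, let V : E → F be a linear isometry, let P₀, P₁ be orthogonal projections on E, let Q₀, Q₁ be orthogonal projections on F, and let η, ε ≥ 0. Assume: (correctness) for every unit vector φ ∈ E and each i ∈ {0,1}, |‖Q_i (V φ)‖² − ‖P_i φ‖²| ≤ η; and (security) for every unit vector ψ ∈ E, |‖Q₁ ((id − 2·Q₀)(V ψ))‖² − ‖P₁ ψ‖²| ≤ ε and |‖Q₀ ((id − 2·Q₁)(V ψ))‖² − ‖P₀ ψ‖²| ≤ ε. For i ∈ {0,1} write Π_i¹ = P_i and Π_i⁰ = id − P_i. Then for every unit vector ψ ∈ E, the total difference of sequential outcome statistics satisfies Σ_{a,b ∈ {0,1}} |‖Π₁ᵇ (Π₀ᵃ ψ)‖² − ‖Π₀ᵃ (Π₁ᵇ ψ)‖²| ≤ 2·(ε + η + 8·√η). (This is the full four-outcome form of the commutativity conclusion, Equation (4) of Theorem 3.4, for pure states.) -/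

import Mathlib

open scoped InnerProductSpace
open RCLike

section helpers
variable {E F : Type*} [NormedAddCommGroup E] [InnerProductSpace ℂ E]
  [NormedAddCommGroup F] [InnerProductSpace ℂ F]

lemma proj_inner_re (P : E →L[ℂ] E) (hidem : ∀ x, P (P x) = P x)
    (hsa : ∀ x y, ⟪P x, y⟫_ℂ = ⟪x, P y⟫_ℂ) (w : E) :
    re ⟪w, P w⟫_ℂ = ‖P w‖ ^ 2 := by
  have h : ⟪P w, P w⟫_ℂ = ⟪w, P (P w)⟫_ℂ := hsa w (P w)
  rw [hidem] at h
  rw [← h, inner_self_eq_norm_sq]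

lemma proj_contract (P : E →L[ℂ] E) (hidem : ∀ x, P (P x) = P x)
    (hsa : ∀ x y, ⟪P x, y⟫_ℂ = ⟪x, P y⟫_ℂ) (w : E) : ‖P w‖ ≤ ‖w‖ := by
  have h1 := proj_inner_re P hidem hsa w
  have h2 : re ⟪w, P w⟫_ℂ ≤ ‖w‖ * ‖P w‖ := by
    calc re ⟪w, P w⟫_ℂ ≤ ‖⟪w, P w⟫_ℂ‖ := Complex.re_le_norm _
    _ ≤ ‖w‖ * ‖P w‖ := norm_inner_le_norm _ _
  nlinarith [norm_nonneg (P w), norm_nonneg w]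

lemma proj_orth (P : E →L[ℂ] E) (hidem : ∀ x, P (P x) = P x)
    (hsa : ∀ x y, ⟪P x, y⟫_ℂ = ⟪x, P y⟫_ℂ) (w : E) :
    ‖w - P w‖ ^ 2 = ‖w‖ ^ 2 - ‖P w‖ ^ 2 := by
  rw [@norm_sub_sq ℂ, proj_inner_re P hidem hsa w]; ring

lemma sqrt_add_le (p q : ℝ) (hp : 0 ≤ p) (hq : 0 ≤ q) :
    Real.sqrt (p + q) ≤ Real.sqrt p + Real.sqrt q := by
  have h : p + q ≤ (Real.sqrt p + Real.sqrt q) ^ 2 := by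
    nlinarith [Real.sq_sqrt hp, Real.sq_sqrt hq, Real.sqrt_nonneg p, Real.sqrt_nonneg q]
  calc Real.sqrt (p + q) ≤ Real.sqrt ((Real.sqrt p + Real.sqrt q) ^ 2) := Real.sqrt_le_sqrt h
  _ = _ := Real.sqrt_sq (by positivity)

end helpers

section steps
variable {E F : Type*} [NormedAddCommGroup E] [InnerProductSpace ℂ E]
  [NormedAddCommGroup F] [InnerProductSpace ℂ F]

-- Step A: scaled correctness
lemma corr_scaled (V : E →ₗᵢ[ℂ] F) (P : E →L[ℂ] E) (Q : F →L[ℂ] F) {η : ℝ} (hη : 0 ≤ η)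
    (hcorr : ∀ φ : E, ‖φ‖ = 1 → |‖Q (V φ)‖ ^ 2 - ‖P φ‖ ^ 2| ≤ η) (φ : E) :
    |‖Q (V φ)‖ ^ 2 - ‖P φ‖ ^ 2| ≤ η * ‖φ‖ ^ 2 := by
  rcases eq_or_ne φ 0 with rfl | hne
  · simp
  · have hc : (0:ℝ) < ‖φ‖ := norm_pos_iff.mpr hne
    set c : ℝ := ‖φ‖ with hcdef
    have hu : ‖(c⁻¹ : ℂ) • φ‖ = 1 := by
      rw [norm_smul]
      simp [hcdef, norm_inv, abs_of_pos hc, inv_mul_cancel₀ (ne_of_gt hc)]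
      exact inv_mul_cancel₀ (ne_of_gt hc)
    have h := hcorr ((c⁻¹ : ℂ) • φ) hu
    have hQ : ‖Q (V ((c⁻¹ : ℂ) • φ))‖ = c⁻¹ * ‖Q (V φ)‖ := by
      rw [V.map_smul, map_smul, norm_smul]
      simp [abs_of_pos hc]
    have hP : ‖P ((c⁻¹ : ℂ) • φ)‖ = c⁻¹ * ‖P φ‖ := by
      rw [map_smul, norm_smul]; simp [abs_of_pos hc]
    rw [hQ, hP] at h
    have hc2 : (0:ℝ) < c ^ 2 := by positivity
    have := mul_le_mul_of_nonneg_left h (le_of_lt hc2)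
    calc |‖Q (V φ)‖ ^ 2 - ‖P φ‖ ^ 2|
        = c ^ 2 * |(c⁻¹ * ‖Q (V φ)‖) ^ 2 - (c⁻¹ * ‖P φ‖) ^ 2| := by
          rw [← abs_of_pos hc2, ← abs_mul]
          congr 1
          field_simp
      _ ≤ c ^ 2 * η := this
      _ = η * ‖φ‖ ^ 2 := by rw [hcdef]; ring

-- Step B: the isometry almost intertwines P and Q
lemma almost_intertwine (V : E →ₗᵢ[ℂ] F) (P : E →L[ℂ] E)
    (hPidem : ∀ x, P (P x) = P x) (hPsa : ∀ x y, ⟪P x, y⟫_ℂ = ⟪x, P y⟫_ℂ)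
    (Q : F →L[ℂ] F) (hQidem : ∀ x, Q (Q x) = Q x) (hQsa : ∀ x y, ⟪Q x, y⟫_ℂ = ⟪x, Q y⟫_ℂ)
    {η : ℝ} (hη : 0 ≤ η)
    (hcorr : ∀ φ : E, ‖φ‖ = 1 → |‖Q (V φ)‖ ^ 2 - ‖P φ‖ ^ 2| ≤ η) (φ : E) :
    ‖Q (V φ) - V (P φ)‖ ≤ Real.sqrt η * ‖φ‖ := by
  set z₁ : F := Q (V (φ - P φ)) with hz₁
  set z₂ : F := V (P φ) - Q (V (P φ)) with hz₂
  have hsplit : Q (V φ) - V (P φ) = z₁ - z₂ := by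
    rw [hz₁, hz₂, V.map_sub, map_sub]
    abel
  have horth : ⟪z₁, z₂⟫_ℂ = 0 := by
    rw [hz₁, hz₂, hQsa]
    have h0 : Q (V (P φ) - Q (V (P φ))) = 0 := by
      rw [map_sub, hQidem, sub_self]
    rw [h0, inner_zero_right]
  have hnormsq : ‖z₁ - z₂‖ ^ 2 = ‖z₁‖ ^ 2 + ‖z₂‖ ^ 2 := by
    rw [@norm_sub_sq ℂ, horth]
    simp
  have hb1 : ‖z₁‖ ^ 2 ≤ η * ‖φ - P φ‖ ^ 2 := by
    have h := corr_scaled V P Q hη hcorr (φ - P φ)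
    have hP0 : P (φ - P φ) = 0 := by rw [map_sub, hPidem]; simp
    rw [hP0] at h
    simp only [norm_zero] at h
    have := abs_le.mp h
    nlinarith [this.2]
  have hb2 : ‖z₂‖ ^ 2 ≤ η * ‖P φ‖ ^ 2 := by
    have h := corr_scaled V P Q hη hcorr (P φ)
    rw [hPidem] at h
    have hv : ‖V (P φ)‖ = ‖P φ‖ := V.norm_map _
    have horthQ : ‖V (P φ) - Q (V (P φ))‖ ^ 2 = ‖V (P φ)‖ ^ 2 - ‖Q (V (P φ))‖ ^ 2 :=
      proj_orth Q hQidem hQsa _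
    rw [hz₂, horthQ, hv]
    have := abs_le.mp h
    nlinarith [this.1]
  have hpyth : ‖φ - P φ‖ ^ 2 + ‖P φ‖ ^ 2 = ‖φ‖ ^ 2 := by
    have := proj_orth P hPidem hPsa φ
    linarith
  have hfin : ‖Q (V φ) - V (P φ)‖ ^ 2 ≤ η * ‖φ‖ ^ 2 := by
    rw [hsplit, hnormsq]
    nlinarith
  have h1 : ‖Q (V φ) - V (P φ)‖ ≤ Real.sqrt (η * ‖φ‖ ^ 2) := by
    rw [← Real.sqrt_sq (norm_nonneg (Q (V φ) - V (P φ)))]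
    exact Real.sqrt_le_sqrt hfin
  calc ‖Q (V φ) - V (P φ)‖ ≤ Real.sqrt (η * ‖φ‖ ^ 2) := h1
    _ = Real.sqrt η * ‖φ‖ := by
        rw [Real.sqrt_mul hη, Real.sqrt_sq (norm_nonneg φ)]

end steps

lemma poly_fact (c t s : ℝ) (hc : 0 ≤ c) (hc1 : c ≤ 1) (ht : 0 ≤ t) (ht2 : t ^ 2 = 1 - c ^ 2)
    (hs : 0 ≤ s) (hs8 : s ≤ 1/8) :
    (1 + c) * t + s * (1 + c) + 2 * c + c ^ 2 ≤ 4 := by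
  nlinarith [sq_nonneg (t - (1 - c)), sq_nonneg (t - 1), sq_nonneg (c - 1), mul_nonneg hc ht,
    sq_nonneg (t - c), mul_nonneg (mul_nonneg hc hc) ht, sq_nonneg (2 * t - (1 - c))]

section key
variable {E F : Type*} [NormedAddCommGroup E] [InnerProductSpace ℂ E]
  [NormedAddCommGroup F] [InnerProductSpace ℂ F]

open RCLike in
lemma key_bound (V : E →ₗᵢ[ℂ] F) (P R : E →L[ℂ] E)
    (hPidem : ∀ x, P (P x) = P x) (hPsa : ∀ x y, ⟪P x, y⟫_ℂ = ⟪x, P y⟫_ℂ)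
    (hRidem : ∀ x, R (R x) = R x) (hRsa : ∀ x y, ⟪R x, y⟫_ℂ = ⟪x, R y⟫_ℂ)
    (Q S : F →L[ℂ] F)
    (hQidem : ∀ x, Q (Q x) = Q x) (hQsa : ∀ x y, ⟪Q x, y⟫_ℂ = ⟪x, Q y⟫_ℂ)
    (hSidem : ∀ x, S (S x) = S x) (hSsa : ∀ x y, ⟪S x, y⟫_ℂ = ⟪x, S y⟫_ℂ)
    {η ε : ℝ} (hη : 0 ≤ η) (hε : 0 ≤ ε)
    (hcorrQ : ∀ φ : E, ‖φ‖ = 1 → |‖Q (V φ)‖ ^ 2 - ‖P φ‖ ^ 2| ≤ η)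
    (hcorrS : ∀ φ : E, ‖φ‖ = 1 → |‖S (V φ)‖ ^ 2 - ‖R φ‖ ^ 2| ≤ η)
    (ψ : E) (hψ : ‖ψ‖ = 1)
    (hsec : |‖S (V ψ - (2 : ℂ) • Q (V ψ))‖ ^ 2 - ‖R ψ‖ ^ 2| ≤ ε) :
    |‖R (P ψ)‖ ^ 2 - re ⟪P ψ, R ψ⟫_ℂ| ≤ (ε + η) / 2 + 4 * Real.sqrt η := by
  set s : ℝ := Real.sqrt η with hsdef
  have hs0 : 0 ≤ s := Real.sqrt_nonneg η
  have hs2 : s ^ 2 = η := Real.sq_sqrt hη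
  set c : ℝ := ‖P ψ‖ with hcdef
  have hc0 : 0 ≤ c := norm_nonneg _
  have hc1 : c ≤ 1 := by
    have := proj_contract P hPidem hPsa ψ
    rw [hψ] at this; exact this
  -- E-side identity : a - r = - re ⟪R(Pψ), Rψ - R(Pψ)⟫
  have hidE : ‖R (P ψ)‖ ^ 2 - re ⟪P ψ, R ψ⟫_ℂ
      = - re ⟪R (P ψ), R ψ - R (P ψ)⟫_ℂ := by
    have h1 : ⟪R (P ψ), R ψ⟫_ℂ = ⟪P ψ, R ψ⟫_ℂ := by
      rw [hRsa, hRidem]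
    have h2 : re ⟪R (P ψ), R (P ψ)⟫_ℂ = ‖R (P ψ)‖ ^ 2 := inner_self_eq_norm_sq _
    rw [inner_sub_right, map_sub, h1, h2]
    ring
  -- the trivial bound |a - r| ≤ c * sqrt(1-c^2) ≤ 1/2
  have hRcontr : ‖R (ψ - P ψ)‖ ≤ ‖ψ - P ψ‖ := proj_contract R hRidem hRsa _
  have hPorth : ‖ψ - P ψ‖ ^ 2 = 1 - c ^ 2 := by
    have := proj_orth P hPidem hPsa ψ
    rw [hψ] at this; simpa using this
  have htriv : |‖R (P ψ)‖ ^ 2 - re ⟪P ψ, R ψ⟫_ℂ| ≤ 1 / 2 := by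
    rw [hidE, abs_neg]
    have hsub : R ψ - R (P ψ) = R (ψ - P ψ) := by rw [map_sub]
    have h3 : |re ⟪R (P ψ), R ψ - R (P ψ)⟫_ℂ| ≤ ‖R (P ψ)‖ * ‖R ψ - R (P ψ)‖ :=
      le_trans (abs_re_le_norm _) (norm_inner_le_norm _ _)
    have h4 : ‖R ψ - R (P ψ)‖ ≤ ‖ψ - P ψ‖ := by rw [hsub]; exact hRcontr
    have h5 : ‖R (P ψ)‖ * ‖ψ - P ψ‖ ≤ 1 / 2 := by
      have hn : 0 ≤ ‖ψ - P ψ‖ := norm_nonneg _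
      have hRc : ‖R (P ψ)‖ ≤ c := proj_contract R hRidem hRsa (P ψ)
      nlinarith [hPorth, sq_nonneg (c - ‖ψ - P ψ‖), norm_nonneg (R (P ψ))]
    calc |re ⟪R (P ψ), R ψ - R (P ψ)⟫_ℂ| ≤ ‖R (P ψ)‖ * ‖R ψ - R (P ψ)‖ := h3
      _ ≤ ‖R (P ψ)‖ * ‖ψ - P ψ‖ := by
          exact mul_le_mul_of_nonneg_left h4 (norm_nonneg _)
      _ ≤ 1 / 2 := h5
  rcases le_or_gt (1/8 : ℝ) s with hbig | hsmall
  · -- big η case: trivial bound suffices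
    have : (1:ℝ)/2 ≤ 4 * s := by linarith
    calc |‖R (P ψ)‖ ^ 2 - re ⟪P ψ, R ψ⟫_ℂ| ≤ 1/2 := htriv
      _ ≤ (ε + η)/2 + 4 * s := by linarith
  · -- small η case
    have hs8 : s ≤ 1/8 := le_of_lt hsmall
    set x : F := V ψ with hxdef
    have hxnorm : ‖x‖ = 1 := by rw [hxdef, V.norm_map, hψ]
    set A : ℝ := ‖S (Q x)‖ ^ 2 with hAdef
    set Rr : ℝ := re ⟪Q x, S x⟫_ℂ with hRrdef
    -- Step C : |A - Rr| ≤ (ε+η)/4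
    have hSS : ⟪S x, S (Q x)⟫_ℂ = ⟪S x, Q x⟫_ℂ := by
      rw [← hSsa (S x) (Q x), hSidem]
    have hCexp : ‖S (x - (2:ℂ) • Q x)‖ ^ 2 = ‖S x‖ ^ 2 - 4 * Rr + 4 * A := by
      have hmap : S (x - (2:ℂ) • Q x) = S x - (2:ℂ) • S (Q x) := by
        rw [map_sub, map_smul]
      rw [hmap, @norm_sub_sq ℂ]
      have hin : re ⟪S x, (2:ℂ) • S (Q x)⟫_ℂ = 2 * re ⟪S x, Q x⟫_ℂ := by
        rw [inner_smul_right, hSS]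
        simp
      have hsm : ‖(2:ℂ) • S (Q x)‖ ^ 2 = 4 * A := by
        rw [norm_smul, hAdef]
        norm_num [mul_pow]
      rw [hin, hsm, hRrdef, inner_re_symm]
      ring
    have hsecx : |‖S x‖ ^ 2 - 4 * Rr + 4 * A - ‖R ψ‖ ^ 2| ≤ ε := by
      rw [← hCexp]
      exact hsec
    have hcorrSψ : |‖S x‖ ^ 2 - ‖R ψ‖ ^ 2| ≤ η := hcorrS ψ hψ
    have hAR : |A - Rr| ≤ (ε + η) / 4 := by
      have h1 := abs_le.mp hsecx
      have h2 := abs_le.mp hcorrSψ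
      rw [abs_le]
      constructor <;> [linarith [h1.1, h2.2]; linarith [h1.2, h2.1]]
    -- Step D : transfer bounds
    have hBQ : ‖Q x - V (P ψ)‖ ≤ s := by
      have h := almost_intertwine V P hPidem hPsa Q hQidem hQsa hη hcorrQ ψ
      rw [hψ, mul_one] at h
      exact h
    have hBS : ‖S x - V (R ψ)‖ ≤ s := by
      have h := almost_intertwine V R hRidem hRsa S hSidem hSsa hη hcorrS ψ
      rw [hψ, mul_one] at h
      exact h
    have hBSP : ‖S (V (P ψ)) - V (R (P ψ))‖ ≤ s * c := by
      have h := almost_intertwine V R hRidem hRsa S hSidem hSsa hη hcorrS (P ψ)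
      rw [← hcdef] at h
      exact h
    have h_u1v1 : ‖S (Q x) - V (R (P ψ))‖ ≤ s * (1 + c) := by
      have htri : ‖S (Q x) - V (R (P ψ))‖
          ≤ ‖S (Q x) - S (V (P ψ))‖ + ‖S (V (P ψ)) - V (R (P ψ))‖ := by
        have := dist_triangle (S (Q x)) (S (V (P ψ))) (V (R (P ψ)))
        simpa [dist_eq_norm] using this
      have h1 : ‖S (Q x) - S (V (P ψ))‖ ≤ s := by
        rw [← map_sub]
        exact le_trans (proj_contract S hSidem hSsa _) hBQ
      linarith
    have h_u2 : ‖S x - S (Q x)‖ ≤ Real.sqrt (1 - c ^ 2) + s := by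
      have h1 : ‖S x - S (Q x)‖ ≤ ‖x - Q x‖ := by
        rw [← map_sub]
        exact proj_contract S hSidem hSsa _
      have hQorth : ‖x - Q x‖ ^ 2 = 1 - ‖Q x‖ ^ 2 := by
        have := proj_orth Q hQidem hQsa x
        rw [hxnorm] at this
        simpa using this
      have hcorrQψ := abs_le.mp (hcorrQ ψ hψ)
      have h2 : ‖x - Q x‖ ^ 2 ≤ 1 - c ^ 2 + η := by
        rw [hQorth]
        have h5 := hcorrQψ.1
        rw [← hcdef, ← hxdef] at h5
        linarith
      have hc2 : (0:ℝ) ≤ 1 - c ^ 2 := by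
        have := pow_le_one₀ hc0 hc1 (n := 2)
        linarith
      have h3 : ‖x - Q x‖ ≤ Real.sqrt (1 - c ^ 2 + η) := by
        rw [← Real.sqrt_sq (norm_nonneg (x - Q x))]
        exact Real.sqrt_le_sqrt h2
      calc ‖S x - S (Q x)‖ ≤ ‖x - Q x‖ := h1
        _ ≤ Real.sqrt (1 - c ^ 2 + η) := h3
        _ ≤ Real.sqrt (1 - c ^ 2) + Real.sqrt η := sqrt_add_le _ _ hc2 hη
        _ = Real.sqrt (1 - c ^ 2) + s := by rw [hsdef]
    have h_v1 : ‖V (R (P ψ))‖ ≤ c := by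
      rw [V.norm_map]
      exact proj_contract R hRidem hRsa (P ψ)
    have h_u2v2 : ‖(S x - S (Q x)) - (V (R ψ) - V (R (P ψ)))‖ ≤ s + s * (1 + c) := by
      have heq : (S x - S (Q x)) - (V (R ψ) - V (R (P ψ)))
          = (S x - V (R ψ)) - (S (Q x) - V (R (P ψ))) := by abel
      rw [heq]
      exact le_trans (norm_sub_le _ _) (add_le_add hBS h_u1v1)
    -- identities
    have hidQ : A - Rr = - re ⟪S (Q x), S x - S (Q x)⟫_ℂ := by
      have h1 : ⟪S (Q x), S x⟫_ℂ = ⟪Q x, S x⟫_ℂ := by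
        rw [hSsa, hSidem]
      have h2 : re ⟪S (Q x), S (Q x)⟫_ℂ = A := inner_self_eq_norm_sq _
      rw [inner_sub_right, map_sub, h1, h2, hRrdef]
      ring
    have hidE' : ‖R (P ψ)‖ ^ 2 - re ⟪P ψ, R ψ⟫_ℂ
        = - re ⟪V (R (P ψ)), V (R ψ) - V (R (P ψ))⟫_ℂ := by
      rw [hidE]
      congr 2
      rw [← V.map_sub, V.inner_map_map]
    -- inner product difference bound
    have hinner : |re ⟪S (Q x), S x - S (Q x)⟫_ℂ
        - re ⟪V (R (P ψ)), V (R ψ) - V (R (P ψ))⟫_ℂ|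
        ≤ ‖S (Q x) - V (R (P ψ))‖ * ‖S x - S (Q x)‖
          + ‖V (R (P ψ))‖ * ‖(S x - S (Q x)) - (V (R ψ) - V (R (P ψ)))‖ := by
      have hsplit2 : ⟪S (Q x), S x - S (Q x)⟫_ℂ - ⟪V (R (P ψ)), V (R ψ) - V (R (P ψ))⟫_ℂ
          = ⟪S (Q x) - V (R (P ψ)), S x - S (Q x)⟫_ℂ
            + ⟪V (R (P ψ)), (S x - S (Q x)) - (V (R ψ) - V (R (P ψ)))⟫_ℂ := by
        simp only [inner_sub_left, inner_sub_right]
        ring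
      calc |re ⟪S (Q x), S x - S (Q x)⟫_ℂ - re ⟪V (R (P ψ)), V (R ψ) - V (R (P ψ))⟫_ℂ|
          = |re (⟪S (Q x), S x - S (Q x)⟫_ℂ - ⟪V (R (P ψ)), V (R ψ) - V (R (P ψ))⟫_ℂ)| := by
            simp
        _ ≤ ‖⟪S (Q x), S x - S (Q x)⟫_ℂ - ⟪V (R (P ψ)), V (R ψ) - V (R (P ψ))⟫_ℂ‖ :=
            abs_re_le_norm _
        _ = ‖⟪S (Q x) - V (R (P ψ)), S x - S (Q x)⟫_ℂ
            + ⟪V (R (P ψ)), (S x - S (Q x)) - (V (R ψ) - V (R (P ψ)))⟫_ℂ‖ := by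
            rw [hsplit2]
        _ ≤ ‖⟪S (Q x) - V (R (P ψ)), S x - S (Q x)⟫_ℂ‖
            + ‖⟪V (R (P ψ)), (S x - S (Q x)) - (V (R ψ) - V (R (P ψ)))⟫_ℂ‖ :=
            norm_add_le _ _
        _ ≤ _ := add_le_add (norm_inner_le_norm _ _) (norm_inner_le_norm _ _)
    -- numeric combination
    set t : ℝ := Real.sqrt (1 - c ^ 2) with htdef
    have ht0 : 0 ≤ t := Real.sqrt_nonneg _
    have ht2 : t ^ 2 = 1 - c ^ 2 := Real.sq_sqrt (by
      have := pow_le_one₀ hc0 hc1 (n := 2)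
      linarith)
    have hpoly : (1 + c) * t + s * (1 + c) + 2 * c + c ^ 2 ≤ 4 :=
      poly_fact c t s hc0 hc1 ht0 ht2 hs0 hs8
    have hprod1 : ‖S (Q x) - V (R (P ψ))‖ * ‖S x - S (Q x)‖ ≤ (s * (1 + c)) * (t + s) :=
      mul_le_mul h_u1v1 h_u2 (norm_nonneg _) (by positivity)
    have hprod2 : ‖V (R (P ψ))‖ * ‖(S x - S (Q x)) - (V (R ψ) - V (R (P ψ)))‖
        ≤ c * (s + s * (1 + c)) :=
      mul_le_mul h_v1 h_u2v2 (norm_nonneg _) hc0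
    have hKnum : (s * (1 + c)) * (t + s) + c * (s + s * (1 + c)) ≤ 4 * s := by
      have h := mul_le_mul_of_nonneg_left hpoly hs0
      calc (s * (1 + c)) * (t + s) + c * (s + s * (1 + c))
          = s * ((1 + c) * t + s * (1 + c) + 2 * c + c ^ 2) := by ring
        _ ≤ s * 4 := h
        _ = 4 * s := by ring
    -- final chain
    have hfinal : |‖R (P ψ)‖ ^ 2 - re ⟪P ψ, R ψ⟫_ℂ - (A - Rr)| ≤ 4 * s := by
      rw [hidE', hidQ]
      have : -re ⟪V (R (P ψ)), V (R ψ) - V (R (P ψ))⟫_ℂ - -re ⟪S (Q x), S x - S (Q x)⟫_ℂ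
          = re ⟪S (Q x), S x - S (Q x)⟫_ℂ - re ⟪V (R (P ψ)), V (R ψ) - V (R (P ψ))⟫_ℂ := by
        ring
      rw [this]
      calc _ ≤ _ := hinner
        _ ≤ (s * (1 + c)) * (t + s) + c * (s + s * (1 + c)) := add_le_add hprod1 hprod2
        _ ≤ 4 * s := hKnum
    have h1 := abs_le.mp hfinal
    have h2 := abs_le.mp hAR
    rw [abs_le]
    constructor <;> [linarith [h1.1, h2.1]; linarith [h1.2, h2.2]]

end key

/-- Full four-outcome form of the commutativity conclusion for pure states: the total
difference of sequential outcome statistics of the two two-outcome measurements is bounded. -/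
theorem signing_forces_commutativity_four_outcomes
    {E F : Type*} [NormedAddCommGroup E] [InnerProductSpace ℂ E]
    [NormedAddCommGroup F] [InnerProductSpace ℂ F]
    (V : E →ₗᵢ[ℂ] F)
    (P₀ P₁ : E →L[ℂ] E)
    (hP₀idem : ∀ x, P₀ (P₀ x) = P₀ x)
    (hP₀sa : ∀ x y, ⟪P₀ x, y⟫_ℂ = ⟪x, P₀ y⟫_ℂ)
    (hP₁idem : ∀ x, P₁ (P₁ x) = P₁ x)
    (hP₁sa : ∀ x y, ⟪P₁ x, y⟫_ℂ = ⟪x, P₁ y⟫_ℂ)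
    (Q₀ Q₁ : F →L[ℂ] F)
    (hQ₀idem : ∀ x, Q₀ (Q₀ x) = Q₀ x)
    (hQ₀sa : ∀ x y, ⟪Q₀ x, y⟫_ℂ = ⟪x, Q₀ y⟫_ℂ)
    (hQ₁idem : ∀ x, Q₁ (Q₁ x) = Q₁ x)
    (hQ₁sa : ∀ x y, ⟪Q₁ x, y⟫_ℂ = ⟪x, Q₁ y⟫_ℂ)
    (η ε : ℝ) (hη : 0 ≤ η) (hε : 0 ≤ ε)
    (hcorr₀ : ∀ φ : E, ‖φ‖ = 1 → |‖Q₀ (V φ)‖ ^ 2 - ‖P₀ φ‖ ^ 2| ≤ η)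
    (hcorr₁ : ∀ φ : E, ‖φ‖ = 1 → |‖Q₁ (V φ)‖ ^ 2 - ‖P₁ φ‖ ^ 2| ≤ η)
    (hsec₁ : ∀ ψ : E, ‖ψ‖ = 1 →
      |‖Q₁ (V ψ - (2 : ℂ) • Q₀ (V ψ))‖ ^ 2 - ‖P₁ ψ‖ ^ 2| ≤ ε)
    (hsec₀ : ∀ ψ : E, ‖ψ‖ = 1 →
      |‖Q₀ (V ψ - (2 : ℂ) • Q₁ (V ψ))‖ ^ 2 - ‖P₀ ψ‖ ^ 2| ≤ ε) :
    ∀ ψ : E, ‖ψ‖ = 1 →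
      |‖((ψ - P₀ ψ) - P₁ (ψ - P₀ ψ))‖ ^ 2 - ‖((ψ - P₁ ψ) - P₀ (ψ - P₁ ψ))‖ ^ 2|
        + |‖P₁ (ψ - P₀ ψ)‖ ^ 2 - ‖(P₁ ψ) - P₀ (P₁ ψ)‖ ^ 2|
        + |‖(P₀ ψ) - P₁ (P₀ ψ)‖ ^ 2 - ‖P₀ (ψ - P₁ ψ)‖ ^ 2|
        + |‖P₁ (P₀ ψ)‖ ^ 2 - ‖P₀ (P₁ ψ)‖ ^ 2|
        ≤ 2 * (ε + η + 8 * Real.sqrt η) := by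
  intro ψ hψ
  set a : ℝ := ‖P₁ (P₀ ψ)‖ ^ 2 with hadef
  set b : ℝ := ‖P₀ (P₁ ψ)‖ ^ 2 with hbdef
  set r : ℝ := RCLike.re ⟪P₀ ψ, P₁ ψ⟫_ℂ with hrdef
  -- the two key estimates
  have ha : |a - r| ≤ (ε + η) / 2 + 4 * Real.sqrt η :=
    key_bound V P₀ P₁ hP₀idem hP₀sa hP₁idem hP₁sa Q₀ Q₁ hQ₀idem hQ₀sa hQ₁idem hQ₁sa
      hη hε hcorr₀ hcorr₁ ψ hψ (hsec₁ ψ hψ)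
  have hb : |b - r| ≤ (ε + η) / 2 + 4 * Real.sqrt η := by
    have h := key_bound V P₁ P₀ hP₁idem hP₁sa hP₀idem hP₀sa Q₁ Q₀ hQ₁idem hQ₁sa hQ₀idem hQ₀sa
      hη hε hcorr₁ hcorr₀ ψ hψ (hsec₀ ψ hψ)
    rw [inner_re_symm, ← hrdef, ← hbdef] at h
    exact h
  -- algebraic identities for the four sequential-measurement probabilities
  have hre1 : RCLike.re ⟪P₁ ψ, P₁ (P₀ ψ)⟫_ℂ = r := by
    rw [← hP₁sa (P₁ ψ) (P₀ ψ), hP₁idem, inner_re_symm, ← hrdef]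
  have hre0 : RCLike.re ⟪P₀ ψ, P₀ (P₁ ψ)⟫_ℂ = r := by
    rw [← hP₀sa (P₀ ψ) (P₁ ψ), hP₀idem, ← hrdef]
  have e2 : ‖P₁ (ψ - P₀ ψ)‖ ^ 2 = ‖P₁ ψ‖ ^ 2 - 2 * r + a := by
    rw [map_sub, @norm_sub_sq ℂ, hre1, ← hadef]
  have e3' : ‖P₀ (ψ - P₁ ψ)‖ ^ 2 = ‖P₀ ψ‖ ^ 2 - 2 * r + b := by
    rw [map_sub, @norm_sub_sq ℂ, hre0, ← hbdef]
  have e2' : ‖(P₁ ψ) - P₀ (P₁ ψ)‖ ^ 2 = ‖P₁ ψ‖ ^ 2 - b := by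
    rw [proj_orth P₀ hP₀idem hP₀sa (P₁ ψ), ← hbdef]
  have e3 : ‖(P₀ ψ) - P₁ (P₀ ψ)‖ ^ 2 = ‖P₀ ψ‖ ^ 2 - a := by
    rw [proj_orth P₁ hP₁idem hP₁sa (P₀ ψ), ← hadef]
  have e1 : ‖((ψ - P₀ ψ) - P₁ (ψ - P₀ ψ))‖ ^ 2
      = (1 - ‖P₀ ψ‖ ^ 2) - (‖P₁ ψ‖ ^ 2 - 2 * r + a) := by
    rw [proj_orth P₁ hP₁idem hP₁sa (ψ - P₀ ψ), e2,
      proj_orth P₀ hP₀idem hP₀sa ψ, hψ]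
    norm_num
  have e1' : ‖((ψ - P₁ ψ) - P₀ (ψ - P₁ ψ))‖ ^ 2
      = (1 - ‖P₁ ψ‖ ^ 2) - (‖P₀ ψ‖ ^ 2 - 2 * r + b) := by
    rw [proj_orth P₀ hP₀idem hP₀sa (ψ - P₁ ψ), e3',
      proj_orth P₁ hP₁idem hP₁sa ψ, hψ]
    norm_num
  rw [e1, e1', e2, e2', e3, e3']
  have h1 := abs_le.mp ha
  have h2 := abs_le.mp hb
  have hs0 : 0 ≤ Real.sqrt η := Real.sqrt_nonneg η
  rcases abs_cases ((1 - ‖P₀ ψ‖ ^ 2) - (‖P₁ ψ‖ ^ 2 - 2 * r + a)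
      - ((1 - ‖P₁ ψ‖ ^ 2) - (‖P₀ ψ‖ ^ 2 - 2 * r + b))) with h3 | h3 <;>
    rcases abs_cases ((‖P₁ ψ‖ ^ 2 - 2 * r + a) - (‖P₁ ψ‖ ^ 2 - b)) with h4 | h4 <;>
    rcases abs_cases ((‖P₀ ψ‖ ^ 2 - a) - (‖P₀ ψ‖ ^ 2 - 2 * r + b)) with h5 | h5 <;>
    rcases abs_cases (a - b) with h6 | h6 <;>
    rw [h3.1, h4.1, h5.1, h6.1] <;>
    linarith [h1.1, h1.2, h2.1, h2.2]
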